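/- arXiv:0710.3872 — 2 statements merged into one kernel-verified Lean document; each statement's English description precedes it below -/
import Mathlib

section
/- The free metabelian Lie algebra F_r is equationally Noetherian: for every n ∈ ℕ and every subset S ⊆ F_{r+n} there exists a finite subset S₀ ⊆ S such that V(S) = V(S₀). -/
open LieAlgebra

universe u v w

/-- A Lie ring is metabelian if it satisfies the identity `⁅⁅x₁,x₂⁆,⁅x₃,x₄⁆⁆ = 0`. -/
def IsMetabelian (L : Type v) [LieRing L] : Prop :=
  ∀ a b c d : L, ⁅⁅a, b⁆, ⁅c, d⁆⁆ = 0

variable (k : Type u) [Field k]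

namespace LieMeta

/-- The canonical projection onto the quotient by a Lie ideal, as a Lie algebra morphism. -/
def mkHom {L : Type v} [LieRing L] [LieAlgebra k L] (I : LieIdeal k L) : L →ₗ⁅k⁆ L ⧸ I :=
  { I.toSubmodule.mkQ with
    map_lie' := fun {_ _} => rfl }

variable {k}

/-- Lift of a Lie algebra morphism through a quotient by an ideal inside its kernel. -/
def qlift {L : Type v} {B : Type w} [LieRing L] [LieAlgebra k L] [LieRing B] [LieAlgebra k B]
    (I : LieIdeal k L) (f : L →ₗ⁅k⁆ B) (h : I ≤ f.ker) : (L ⧸ I) →ₗ⁅k⁆ B :=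
  { Submodule.liftQ I.toSubmodule (f : L →ₗ[k] B)
      (fun x hx => by simpa using (LieHom.mem_ker).mp (h hx)) with
    map_lie' := by
      rintro ⟨x⟩ ⟨y⟩
      exact f.map_lie x y }

@[simp]
theorem qlift_mk {L : Type v} {B : Type w} [LieRing L] [LieAlgebra k L] [LieRing B]
    [LieAlgebra k B] (I : LieIdeal k L) (f : L →ₗ⁅k⁆ B) (h : I ≤ f.ker) (x : L) :
    qlift I f h (mkHom k I x) = f x := rfl

/-- In a metabelian Lie algebra the second derived ideal vanishes. -/
theorem derivedSeries_two_eq_bot_of_isMetabelian {B : Type w} [LieRing B] [LieAlgebra k B]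
    (hB : IsMetabelian B) : derivedSeries k B 2 = ⊥ := by
  have hD1 : ∀ x ∈ derivedSeries k B 1, ∀ m ∈ derivedSeries k B 1, ⁅x, m⁆ = (0 : B) := by
    have hspan : (↑(derivedSeries k B 1) : Submodule k B) =
        Submodule.span k {m | ∃ x ∈ (⊤ : LieIdeal k B), ∃ n ∈ (⊤ : LieIdeal k B), ⁅x, n⁆ = m} := by
      rw [show derivedSeries k B 1 = ⁅(⊤ : LieIdeal k B), (⊤ : LieIdeal k B)⁆ by
        rw [derivedSeries_def, derivedSeriesOfIdeal_succ, derivedSeriesOfIdeal_zero]]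
      exact LieSubmodule.lieIdeal_oper_eq_linear_span' ..
    intro x hx
    have hx' : x ∈ Submodule.span k
        {m | ∃ x ∈ (⊤ : LieIdeal k B), ∃ n ∈ (⊤ : LieIdeal k B), ⁅x, n⁆ = m} := by
      rw [← hspan]; exact hx
    clear hx
    induction hx' using Submodule.span_induction with
    | mem z hz =>
      obtain ⟨a, -, b, -, rfl⟩ := hz
      intro m hm
      have hm' : m ∈ Submodule.span k
          {m | ∃ x ∈ (⊤ : LieIdeal k B), ∃ n ∈ (⊤ : LieIdeal k B), ⁅x, n⁆ = m} := by
        rw [← hspan]; exact hm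
      clear hm
      induction hm' using Submodule.span_induction with
      | mem w hw => obtain ⟨c, -, d, -, rfl⟩ := hw; exact hB a b c d
      | zero => exact lie_zero _
      | add u v _ _ hu hv => rw [lie_add, hu, hv, add_zero]
      | smul t u _ hu => rw [lie_smul, hu, smul_zero]
    | zero => intro m _; exact zero_lie m
    | add u v _ _ hu hv =>
      intro m hm; rw [add_lie, hu m hm, hv m hm, add_zero]
    | smul t u _ hu => intro m hm; rw [smul_lie, hu m hm, smul_zero]
  rw [eq_bot_iff, show derivedSeries k B 2 = ⁅derivedSeries k B 1, derivedSeries k B 1⁆ by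
    rw [derivedSeries_def, derivedSeriesOfIdeal_succ]]
  rw [LieSubmodule.lie_le_iff]
  intro x hx m hm
  rw [LieSubmodule.mem_bot]
  exact hD1 x hx m hm

end LieMeta

/-- The free metabelian Lie algebra over `k` on a set `X` of generators: the quotient of the
free Lie algebra by its second derived ideal. -/
abbrev FreeMetabelian (X : Type v) : Type _ :=
  FreeLieAlgebra k X ⧸ derivedSeries k (FreeLieAlgebra k X) 2

namespace FreeMetabelian

/-- The canonical (free) generators of the free metabelian Lie algebra. -/
noncomputable def of (X : Type v) (x : X) : FreeMetabelian k X :=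
  LieMeta.mkHom k (derivedSeries k (FreeLieAlgebra k X) 2) (FreeLieAlgebra.of k x)

theorem isMetabelian (X : Type v) : IsMetabelian (FreeMetabelian k X) := by
  rintro ⟨a⟩ ⟨b⟩ ⟨c⟩ ⟨d⟩
  show LieMeta.mkHom k (derivedSeries k (FreeLieAlgebra k X) 2) ⁅⁅a, b⁆, ⁅c, d⁆⁆ = 0
  have h1 : ∀ x y : FreeLieAlgebra k X, ⁅x, y⁆ ∈ derivedSeries k (FreeLieAlgebra k X) 1 := by
    intro x y
    rw [show derivedSeries k (FreeLieAlgebra k X) 1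
        = ⁅(⊤ : LieIdeal k (FreeLieAlgebra k X)), (⊤ : LieIdeal k (FreeLieAlgebra k X))⁆ by
      rw [derivedSeries_def, derivedSeriesOfIdeal_succ, derivedSeriesOfIdeal_zero]]
    exact LieSubmodule.lie_mem_lie trivial trivial
  have h2 : ⁅⁅a, b⁆, ⁅c, d⁆⁆ ∈ derivedSeries k (FreeLieAlgebra k X) 2 := by
    rw [show derivedSeries k (FreeLieAlgebra k X) 2
        = ⁅derivedSeries k (FreeLieAlgebra k X) 1, derivedSeries k (FreeLieAlgebra k X) 1⁆ by
      rw [derivedSeries_def, derivedSeriesOfIdeal_succ]]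
    exact LieSubmodule.lie_mem_lie (h1 a b) (h1 c d)
  exact (LieSubmodule.Quotient.mk_eq_zero _).mpr h2

variable {k}

/-- The universal property: a map on generators into a metabelian Lie algebra extends
uniquely to the free metabelian Lie algebra. -/
noncomputable def lift {X : Type v} {B : Type w} [LieRing B] [LieAlgebra k B]
    (f : X → B) (hB : IsMetabelian B) : FreeMetabelian k X →ₗ⁅k⁆ B :=
  LieMeta.qlift _ (FreeLieAlgebra.lift k f) (by
    intro x hx
    rw [LieHom.mem_ker]
    have h1 : FreeLieAlgebra.lift k f x ∈
        LieIdeal.map (FreeLieAlgebra.lift k f) (derivedSeries k (FreeLieAlgebra k X) 2) :=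
      LieIdeal.mem_map hx
    have h2 := LieIdeal.derivedSeries_map_le (f := FreeLieAlgebra.lift k f) 2
    rw [LieMeta.derivedSeries_two_eq_bot_of_isMetabelian hB] at h2
    simpa using h2 h1)

@[simp]
theorem lift_of {X : Type v} {B : Type w} [LieRing B] [LieAlgebra k B]
    (f : X → B) (hB : IsMetabelian B) (x : X) : lift f hB (of k X x) = f x := by
  show FreeLieAlgebra.lift k f (FreeLieAlgebra.of k x) = f x
  simp

end FreeMetabelian

namespace LieAG

variable (r n : ℕ)

/-- The inclusion of `F_r` into `F_{r+n}` sending `aᵢ` to `aᵢ`. -/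
noncomputable def incl : FreeMetabelian k (Fin r) →ₗ⁅k⁆ FreeMetabelian k (Fin r ⊕ Fin n) :=
  FreeMetabelian.lift (fun i => FreeMetabelian.of k _ (Sum.inl i))
    (FreeMetabelian.isMetabelian k _)

/-- Evaluation at the point `p`: the unique Lie algebra morphism `F_{r+n} → F_r` which is the
identity on the generators of `F_r` and sends the unknown `xⱼ` to `p j`. -/
noncomputable def ev (p : Fin n → FreeMetabelian k (Fin r)) :
    FreeMetabelian k (Fin r ⊕ Fin n) →ₗ⁅k⁆ FreeMetabelian k (Fin r) :=
  FreeMetabelian.lift (Sum.elim (FreeMetabelian.of k _) p) (FreeMetabelian.isMetabelian k _)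

/-- The algebraic set defined by the system of equations `S ⊆ F_{r+n}`. -/
def vSet (S : Set (FreeMetabelian k (Fin r ⊕ Fin n))) :
    Set (Fin n → FreeMetabelian k (Fin r)) :=
  {p | ∀ f ∈ S, ev k r n p f = 0}

/-- A subset of affine `n`-space over `F_r` is algebraic if it is the solution set of some
system of equations. -/
def IsAlgSet (Y : Set (Fin n → FreeMetabelian k (Fin r))) : Prop :=
  ∃ S, Y = vSet k r n S

/-- The radical of a subset `Y` of affine `n`-space, as a Lie ideal of `F_{r+n}`:
all equations vanishing on every point of `Y`. -/
noncomputable def radIdeal (Y : Set (Fin n → FreeMetabelian k (Fin r))) :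
    LieIdeal k (FreeMetabelian k (Fin r ⊕ Fin n)) :=
  ⨅ (p : Fin n → FreeMetabelian k (Fin r)) (_ : p ∈ Y), (ev k r n p).ker

/-- The coordinate algebra `Γ(Y) = F_{r+n} / Rad(Y)`. -/
abbrev Coord (Y : Set (Fin n → FreeMetabelian k (Fin r))) : Type _ :=
  FreeMetabelian k (Fin r ⊕ Fin n) ⧸ radIdeal k r n Y

/-- The canonical morphism `κ_Y : F_r → Γ(Y)`. -/
noncomputable def kappa (Y : Set (Fin n → FreeMetabelian k (Fin r))) :
    FreeMetabelian k (Fin r) →ₗ⁅k⁆ Coord k r n Y :=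
  (LieMeta.mkHom k (radIdeal k r n Y)).comp (incl k r n)

theorem radIdeal_le_ker {Y : Set (Fin n → FreeMetabelian k (Fin r))}
    {p : Fin n → FreeMetabelian k (Fin r)} (hp : p ∈ Y) :
    radIdeal k r n Y ≤ (ev k r n p).ker := by
  exact iInf₂_le p hp

/-- The `F_r`-morphism `Γ(Y) → F_r` induced by evaluation at a point of `Y`. -/
noncomputable def pointHom {Y : Set (Fin n → FreeMetabelian k (Fin r))}
    {p : Fin n → FreeMetabelian k (Fin r)} (hp : p ∈ Y) :
    Coord k r n Y →ₗ⁅k⁆ FreeMetabelian k (Fin r) :=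
  LieMeta.qlift _ (ev k r n p) (radIdeal_le_ker k r n hp)

/-- The point of affine space associated with a morphism `Γ(Y) → F_r`: the images of
the unknowns. -/
noncomputable def pointOf {Y : Set (Fin n → FreeMetabelian k (Fin r))}
    (φ : Coord k r n Y →ₗ⁅k⁆ FreeMetabelian k (Fin r)) :
    Fin n → FreeMetabelian k (Fin r) :=
  fun j => φ (LieMeta.mkHom k (radIdeal k r n Y) (FreeMetabelian.of k _ (Sum.inr j)))

/-- The Zariski topology on affine `n`-space over `F_r`: the algebraic sets form a
subbasis of closed sets. -/
def zariski : TopologicalSpace (Fin n → FreeMetabelian k (Fin r)) :=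
  TopologicalSpace.generateFrom {U | ∃ S, U = (vSet k r n S)ᶜ}

/-- A closed subset (in the Zariski topology) is irreducible if it is nonempty and is not the
union of two proper closed subsets. -/
def IsIrredClosed (Y : Set (Fin n → FreeMetabelian k (Fin r))) : Prop :=
  Y.Nonempty ∧ ∀ Y₁ Y₂ : Set (Fin n → FreeMetabelian k (Fin r)),
    @IsClosed _ (zariski k r n) Y₁ → @IsClosed _ (zariski k r n) Y₂ →
      Y₁ ⊂ Y → Y₂ ⊂ Y → Y ≠ Y₁ ∪ Y₂

/-- `Y` and `Z` are isomorphic algebraic sets: there are mutually inverse morphisms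
(given coordinatewise by Lie polynomials) between them. -/
def AlgIso {n m : ℕ} (Y : Set (Fin n → FreeMetabelian k (Fin r)))
    (Z : Set (Fin m → FreeMetabelian k (Fin r))) : Prop :=
  ∃ (fs : Fin m → FreeMetabelian k (Fin r ⊕ Fin n))
    (gs : Fin n → FreeMetabelian k (Fin r ⊕ Fin m)),
    (∀ p ∈ Y, (fun j => ev k r n p (fs j)) ∈ Z) ∧
    (∀ q ∈ Z, (fun i => ev k r m q (gs i)) ∈ Y) ∧
    (∀ p ∈ Y, (fun i => ev k r m (fun j => ev k r n p (fs j)) (gs i)) = p) ∧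
    (∀ q ∈ Z, (fun j => ev k r n (fun i => ev k r m q (gs i)) (fs j)) = q)

end LieAG

/-- The Fitting radical of a Lie algebra: the set of elements whose generated Lie ideal is
nilpotent. -/
def fittingSet (B : Type w) [LieRing B] [LieAlgebra k B] : Set B :=
  {x | LieModule.IsNilpotent (LieSubmodule.lieSpan k B ({x} : Set B))
    (LieSubmodule.lieSpan k B ({x} : Set B))}

/-! ### Auxiliary development for the proof of equational Noetherianity -/

namespace MetaNoeth

open FreeMetabelian

section Basic

variable (k : Type u) [Field k]

/-- Two Lie algebra morphisms out of a free metabelian Lie algebra agreeing on the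
generators are equal. -/
theorem fm_hom_ext {X : Type v} {B : Type w} [LieRing B] [LieAlgebra k B]
    {g₁ g₂ : FreeMetabelian k X →ₗ⁅k⁆ B}
    (h : ∀ x, g₁ (of k X x) = g₂ (of k X x)) : g₁ = g₂ := by
  have key : g₁.comp (LieMeta.mkHom k (derivedSeries k (FreeLieAlgebra k X) 2)) =
      g₂.comp (LieMeta.mkHom k (derivedSeries k (FreeLieAlgebra k X) 2)) :=
    FreeLieAlgebra.hom_ext fun x => h x
  ext z
  obtain ⟨y⟩ := z
  exact DFunLike.congr_fun key y

/-- The free metabelian Lie algebra is generated, as a Lie algebra, by its generators. -/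
theorem lieSpan_of_eq_top (X : Type v) :
    LieSubalgebra.lieSpan k (FreeMetabelian k X) (Set.range (of k X)) = ⊤ := by
  set S := LieSubalgebra.lieSpan k (FreeMetabelian k X) (Set.range (of k X)) with hSdef
  have hS : IsMetabelian S := by
    intro a b c d
    apply Subtype.ext
    show ((⁅⁅a, b⁆, ⁅c, d⁆⁆ : S) : FreeMetabelian k X) = ((0 : S) : FreeMetabelian k X)
    rw [LieSubalgebra.coe_bracket, LieSubalgebra.coe_bracket, LieSubalgebra.coe_bracket]
    rw [ZeroMemClass.coe_zero]
    exact FreeMetabelian.isMetabelian k X (a : FreeMetabelian k X) b c d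
  let h : FreeMetabelian k X →ₗ⁅k⁆ S :=
    FreeMetabelian.lift
      (fun x => (⟨of k X x, LieSubalgebra.subset_lieSpan (Set.mem_range_self x)⟩ : S)) hS
  have key : S.incl.comp h = LieHom.id := by
    apply fm_hom_ext k
    intro x
    show S.incl (h (of k X x)) = of k X x
    rw [show h (of k X x) = _ from FreeMetabelian.lift_of _ hS x]
    rfl
  rw [eq_top_iff]
  intro z _
  have hz : S.incl (h z) = z := DFunLike.congr_fun key z
  rw [← hz]
  exact (h z).2

end Basic

section Abelianization

variable (k : Type u) [Field k] (r : ℕ)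

attribute [local instance] LieRing.ofAssociativeRing

/-- The abelianization target: `k^r` with the (trivial) Lie bracket coming from the
commutative ring structure. -/
abbrev Ab : Type u := Fin r → k

theorem ab_bracket (x y : Ab k r) : ⁅x, y⁆ = 0 := by
  rw [Ring.lie_def, mul_comm, sub_self]

theorem ab_metabelian : IsMetabelian (Ab k r) := fun a b c d => ab_bracket k r _ _

/-- The abelianization morphism recording the coefficients of the generators. -/
noncomputable def piAb : FreeMetabelian k (Fin r) →ₗ⁅k⁆ Ab k r :=
  FreeMetabelian.lift (fun i => Pi.single i 1) (ab_metabelian k r)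

@[simp]
theorem piAb_of (i : Fin r) : piAb k r (of k (Fin r) i) = Pi.single i 1 :=
  FreeMetabelian.lift_of _ _ i

/-- The derived ideal of the free metabelian Lie algebra of rank `r`. -/
noncomputable def DD : LieIdeal k (FreeMetabelian k (Fin r)) :=
  derivedSeries k (FreeMetabelian k (Fin r)) 1

theorem bracket_mem_DD (x y : FreeMetabelian k (Fin r)) : ⁅x, y⁆ ∈ DD k r := by
  rw [show DD k r
      = ⁅(⊤ : LieIdeal k (FreeMetabelian k (Fin r))), (⊤ : LieIdeal k (FreeMetabelian k (Fin r)))⁆ by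
    rw [DD, derivedSeries_def k (FreeMetabelian k (Fin r)) 1, derivedSeriesOfIdeal_succ,
      derivedSeriesOfIdeal_zero]]
  exact LieSubmodule.lie_mem_lie trivial trivial

theorem DD_bracket_eq_zero {x y : FreeMetabelian k (Fin r)} (hx : x ∈ DD k r)
    (hy : y ∈ DD k r) : ⁅x, y⁆ = 0 := by
  have h2 : ⁅x, y⁆ ∈ derivedSeries k (FreeMetabelian k (Fin r)) 2 := by
    rw [show derivedSeries k (FreeMetabelian k (Fin r)) 2 = ⁅DD k r, DD k r⁆ by
      rw [DD, derivedSeries_def k (FreeMetabelian k (Fin r)) 2, derivedSeriesOfIdeal_succ,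
        derivedSeries_def k (FreeMetabelian k (Fin r)) 1]]
    exact LieSubmodule.lie_mem_lie hx hy
  rw [LieMeta.derivedSeries_two_eq_bot_of_isMetabelian (FreeMetabelian.isMetabelian k (Fin r))]
    at h2
  exact (LieSubmodule.mem_bot _).mp h2

theorem ab_derived_one : derivedSeries k (Ab k r) 1 = ⊥ := by
  rw [derivedSeries_def k (Ab k r) 1, derivedSeriesOfIdeal_succ, derivedSeriesOfIdeal_zero,
    eq_bot_iff, LieSubmodule.lie_le_iff]
  intro x _ m _
  rw [LieSubmodule.mem_bot]
  exact ab_bracket k r x m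

theorem piAb_eq_zero_of_mem_DD {u : FreeMetabelian k (Fin r)} (hu : u ∈ DD k r) :
    piAb k r u = 0 := by
  have h1 : piAb k r u ∈ LieIdeal.map (piAb k r) (DD k r) := LieIdeal.mem_map hu
  have h2 := LieIdeal.derivedSeries_map_le (f := piAb k r) 1
  rw [show derivedSeries k (FreeMetabelian k (Fin r)) 1 = DD k r from rfl] at h2
  rw [ab_derived_one] at h2
  simpa using h2 h1

theorem sub_sum_mem_DD (x : FreeMetabelian k (Fin r)) :
    x - ∑ i, piAb k r x i • of k (Fin r) i ∈ DD k r := by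
  have hx : x ∈ LieSubalgebra.lieSpan k (FreeMetabelian k (Fin r))
      (Set.range (of k (Fin r))) := by
    rw [lieSpan_of_eq_top]; trivial
  refine LieSubalgebra.lieSpan_induction (R := k) (L := FreeMetabelian k (Fin r))
    (p := fun z _ => z - ∑ i, piAb k r z i • of k (Fin r) i ∈ DD k r) (hx := hx) ?_ ?_ ?_ ?_ ?_
  · intro z hz
    obtain ⟨i0, rfl⟩ := hz
    have : ∑ i, piAb k r (of k (Fin r) i0) i • of k (Fin r) i = of k (Fin r) i0 := by
      rw [piAb_of]
      rw [Finset.sum_eq_single i0]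
      · rw [Pi.single_eq_same, one_smul]
      · intro b _ hb
        rw [Pi.single_eq_of_ne hb, zero_smul]
      · intro h; exact absurd (Finset.mem_univ i0) h
    rw [this, sub_self]
    exact (DD k r).zero_mem
  · simpa using (DD k r).zero_mem
  pick_goal 2
  · intro t y _ hy
    have : t • y - ∑ i, piAb k r (t • y) i • of k (Fin r) i
        = t • (y - ∑ i, piAb k r y i • of k (Fin r) i) := by
      rw [smul_sub, Finset.smul_sum]
      congr 1
      refine Finset.sum_congr rfl fun i _ => ?_
      rw [map_smul, smul_smul]
      rfl
    rw [this]
    exact (DD k r).smul_mem _ hy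
  · intro u v _ _ hu hv
    have : u + v - ∑ i, piAb k r (u + v) i • of k (Fin r) i
        = (u - ∑ i, piAb k r u i • of k (Fin r) i)
          + (v - ∑ i, piAb k r v i • of k (Fin r) i) := by
      rw [map_add]
      rw [show ∀ w₁ w₂ : Ab k r, ∑ i, (w₁ + w₂) i • of k (Fin r) i
          = ∑ i, w₁ i • of k (Fin r) i + ∑ i, w₂ i • of k (Fin r) i from fun w₁ w₂ => by
        rw [← Finset.sum_add_distrib]
        exact Finset.sum_congr rfl fun i _ => by rw [Pi.add_apply, add_smul]]
      abel
    rw [this]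
    exact (DD k r).add_mem hu hv
  · intro u v _ _ _ _
    have h0 : piAb k r ⁅u, v⁆ = 0 := by
      rw [LieHom.map_lie]
      exact ab_bracket k r _ _
    rw [h0]
    simpa using bracket_mem_DD k r u v

end Abelianization

section Module

variable (k : Type u) [Field k] (r n : ℕ)

attribute [local instance] LieRing.ofAssociativeRing

/-- Affine `n`-space over the free metabelian Lie algebra of rank `r`. -/
abbrev Pt : Type u := Fin n → FreeMetabelian k (Fin r)

/-- The linear coordinates of the point `p`. -/
noncomputable def lam (p : Pt k r n) (j : Fin n) (i : Fin r) : k := piAb k r (p j) i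

/-- The "derived part" of the coordinate `p j` of the point `p`. -/
noncomputable def mpart (p : Pt k r n) (j : Fin n) : ↥(DD k r) :=
  ⟨p j - ∑ i, lam k r n p j i • of k (Fin r) i, sub_sum_mem_DD k r (p j)⟩

/-- The adjoint action of the generator `aᵢ` on the derived ideal. -/
noncomputable def adA (i : Fin r) : Module.End k ↥(DD k r) :=
  LieModule.toEnd k (FreeMetabelian k (Fin r)) ↥(DD k r) (of k (Fin r) i)

theorem adA_apply (i : Fin r) (u : ↥(DD k r)) :
    ((adA k r i u : ↥(DD k r)) : FreeMetabelian k (Fin r)) = ⁅of k (Fin r) i, (u : _)⁆ := rfl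

theorem adA_comm (i i' : Fin r) : adA k r i * adA k r i' = adA k r i' * adA k r i := by
  apply LinearMap.ext
  intro u
  simp only [Module.End.mul_apply, adA, LieModule.toEnd_apply_apply]
  have h0 : (⁅⁅of k (Fin r) i, of k (Fin r) i'⁆, u⁆ : ↥(DD k r)) = 0 := by
    apply Subtype.ext
    exact DD_bracket_eq_zero k r (bracket_mem_DD k r _ _) u.2
  have h := lie_lie (of k (Fin r) i) (of k (Fin r) i') u
  rw [h0] at h
  exact sub_eq_zero.mp h.symm

set_option synthInstance.maxHeartbeats 1000000

/-- The variables of our auxiliary polynomial ring: linear coordinates of the point,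
and the adjoint operators. -/
abbrev Vars : Type := (Fin n × Fin r) ⊕ Fin r

/-- The auxiliary (Noetherian) polynomial ring. -/
abbrev Rg : Type u := MvPolynomial (Vars r n) k

/-- The commutative subalgebra of endomorphisms of the derived ideal generated by the
adjoint operators of the generators. -/
noncomputable def Asub : Subalgebra k (Module.End k ↥(DD k r)) :=
  Algebra.adjoin k (Set.range (adA k r))

noncomputable local instance : CommSemiring ↥(Asub k r) :=
  { (Asub k r).toSemiring with
    mul_comm := (Algebra.adjoinCommSemiringOfComm k <| by
      rintro a ⟨i, rfl⟩ b ⟨i', rfl⟩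
      exact adA_comm k r i i').mul_comm }

/-- The operator values substituted for the variables, at the point `p`. -/
noncomputable def cOps (p : Pt k r n) : Vars r n → ↥(Asub k r) :=
  Sum.elim (fun ji => algebraMap k ↥(Asub k r) (lam k r n p ji.1 ji.2))
    (fun i => ⟨adA k r i, Algebra.subset_adjoin (Set.mem_range_self i)⟩)

/-- Evaluation of a polynomial at the operators associated with the point `p`. -/
noncomputable def Ep (p : Pt k r n) : Rg k r n →ₐ[k] ↥(Asub k r) :=
  MvPolynomial.aeval (cOps k r n p)

/-- Scalar evaluation at the point `p` (the adjoint variables are sent to `0`). -/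
noncomputable def ev0 (p : Pt k r n) : Rg k r n →ₐ[k] k :=
  MvPolynomial.aeval (Sum.elim (fun ji => lam k r n p ji.1 ji.2) (fun _ => 0))

/-- The substitution killing the adjoint variables. -/
noncomputable def tau : Rg k r n →ₐ[k] Rg k r n :=
  MvPolynomial.aeval (Sum.elim (fun ji => MvPolynomial.X (Sum.inl ji)) (fun _ => 0))

theorem Ep_tau (p : Pt k r n) (q : Rg k r n) :
    Ep k r n p (tau k r n q) = algebraMap k ↥(Asub k r) (ev0 k r n p q) := by
  have h : (Ep k r n p).comp (tau k r n)
      = (Algebra.ofId k ↥(Asub k r)).comp (ev0 k r n p) := by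
    apply MvPolynomial.algHom_ext
    intro s
    cases s with
    | inl ji =>
      simp [Ep, tau, ev0, cOps, Algebra.ofId_apply]
    | inr i =>
      simp [Ep, tau, ev0, Algebra.ofId_apply]
  exact DFunLike.congr_fun h q

/-- The index set for our big free module. -/
abbrev Idx : Type := Fin r ⊕ ((Fin r × Fin r) ⊕ Fin n)

/-- The big free module: a free module of finite rank over the polynomial ring. -/
abbrev Mod : Type u := Idx r n → Rg k r n

/-- The "meaning" of the derived-part basis symbols at the point `p`. -/
noncomputable def wGen (p : Pt k r n) : (Fin r × Fin r) ⊕ Fin n → ↥(DD k r) :=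
  Sum.elim (fun ii => ⟨⁅of k (Fin r) ii.1, of k (Fin r) ii.2⁆, bracket_mem_DD k r _ _⟩)
    (mpart k r n p)

/-- The linear part of the evaluation of a symbolic element at the point `p`. -/
noncomputable def s1 (p : Pt k r n) (v : Mod k r n) : FreeMetabelian k (Fin r) :=
  ∑ i, ev0 k r n p (v (Sum.inl i)) • of k (Fin r) i

/-- The derived part of the evaluation of a symbolic element at the point `p`. -/
noncomputable def s2 (p : Pt k r n) (v : Mod k r n) : ↥(DD k r) :=
  ∑ c, ((Ep k r n p (v (Sum.inr c)) : Module.End k ↥(DD k r)) (wGen k r n p c))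

/-- Full evaluation of a symbolic element at the point `p`. -/
noncomputable def eVal (p : Pt k r n) (v : Mod k r n) : FreeMetabelian k (Fin r) :=
  s1 k r n p v + ↑(s2 k r n p v)

theorem s1_add (p : Pt k r n) (v w : Mod k r n) :
    s1 k r n p (v + w) = s1 k r n p v + s1 k r n p w := by
  rw [s1, s1, s1, ← Finset.sum_add_distrib]
  exact Finset.sum_congr rfl fun i _ => by rw [Pi.add_apply, map_add, add_smul]

theorem s2_add (p : Pt k r n) (v w : Mod k r n) :
    s2 k r n p (v + w) = s2 k r n p v + s2 k r n p w := by
  rw [s2, s2, s2, ← Finset.sum_add_distrib]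
  refine Finset.sum_congr rfl fun c _ => ?_
  rw [Pi.add_apply, map_add]
  rfl

theorem s1_zero (p : Pt k r n) : s1 k r n p 0 = 0 := by
  rw [s1]
  refine Finset.sum_eq_zero fun i _ => ?_
  rw [Pi.zero_apply, map_zero, zero_smul]

theorem s2_zero (p : Pt k r n) : s2 k r n p 0 = 0 := by
  rw [s2]
  refine Finset.sum_eq_zero fun c _ => ?_
  rw [Pi.zero_apply, map_zero]
  rfl

theorem s1_smul (p : Pt k r n) (g : Rg k r n) (v : Mod k r n) :
    s1 k r n p (g • v) = ev0 k r n p g • s1 k r n p v := by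
  rw [s1, s1, Finset.smul_sum]
  refine Finset.sum_congr rfl fun i _ => ?_
  rw [Pi.smul_apply, smul_eq_mul, map_mul, smul_smul]

theorem s2_smul (p : Pt k r n) (g : Rg k r n) (v : Mod k r n) :
    s2 k r n p (g • v)
      = (Ep k r n p g : Module.End k ↥(DD k r)) (s2 k r n p v) := by
  rw [s2, s2, map_sum]
  refine Finset.sum_congr rfl fun c _ => ?_
  rw [Pi.smul_apply, smul_eq_mul, map_mul]
  rfl

theorem eVal_add (p : Pt k r n) (v w : Mod k r n) :
    eVal k r n p (v + w) = eVal k r n p v + eVal k r n p w := by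
  rw [eVal, eVal, eVal, s1_add, s2_add]
  push_cast
  abel

theorem eVal_zero (p : Pt k r n) : eVal k r n p 0 = 0 := by
  rw [eVal, s1_zero, s2_zero]
  simp

theorem eVal_smulk (p : Pt k r n) (c : k) (v : Mod k r n) :
    eVal k r n p ((MvPolynomial.C c : Rg k r n) • v) = c • eVal k r n p v := by
  rw [eVal, eVal, s1_smul, s2_smul, smul_add]
  have h1 : ev0 k r n p (MvPolynomial.C c) = c := by
    simpa using (ev0 k r n p).commutes c
  have h2 : Ep k r n p (MvPolynomial.C c) = algebraMap k ↥(Asub k r) c := by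
    simpa using (Ep k r n p).commutes c
  rw [h1, h2]
  simp [Subalgebra.coe_algebraMap, Module.algebraMap_end_apply]

theorem Ep_mul_apply (p : Pt k r n) (g h : Rg k r n) (u : ↥(DD k r)) :
    (Ep k r n p (g * h) : Module.End k ↥(DD k r)) u
      = (Ep k r n p g : Module.End k ↥(DD k r))
          ((Ep k r n p h : Module.End k ↥(DD k r)) u) := by
  rw [map_mul]
  rfl

theorem Ep_X_apply (p : Pt k r n) (i : Fin r) (u : ↥(DD k r)) :
    (Ep k r n p (MvPolynomial.X (Sum.inr i)) : Module.End k ↥(DD k r)) u = adA k r i u := by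
  simp only [Ep, MvPolynomial.aeval_X, cOps, Sum.elim_inr]

theorem Ep_C_apply (p : Pt k r n) (c : k) (u : ↥(DD k r)) :
    (Ep k r n p (MvPolynomial.C c) : Module.End k ↥(DD k r)) u = c • u := by
  have h2 : Ep k r n p (MvPolynomial.C c) = algebraMap k ↥(Asub k r) c := by
    simpa using (Ep k r n p).commutes c
  rw [h2]
  simp [Subalgebra.coe_algebraMap, Module.algebraMap_end_apply]

theorem Ep_tau_apply (p : Pt k r n) (q : Rg k r n) (u : ↥(DD k r)) :
    (Ep k r n p (tau k r n q) : Module.End k ↥(DD k r)) u = ev0 k r n p q • u := by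
  rw [Ep_tau]
  simp [Subalgebra.coe_algebraMap, Module.algebraMap_end_apply]

/-- The symbolic elements vanishing at the point `p` form a submodule over the
polynomial ring. -/
noncomputable def Zsub (p : Pt k r n) : Submodule (Rg k r n) (Mod k r n) where
  carrier := {v | s1 k r n p v = 0 ∧ s2 k r n p v = 0}
  add_mem' := by
    intro a b ha hb
    exact ⟨by rw [s1_add, ha.1, hb.1, add_zero], by rw [s2_add, ha.2, hb.2, add_zero]⟩
  zero_mem' := ⟨s1_zero k r n p, s2_zero k r n p⟩
  smul_mem' := by
    intro g v hv
    exact ⟨by rw [s1_smul, hv.1, smul_zero], by rw [s2_smul, hv.2, map_zero]⟩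

theorem eVal_eq_zero_iff (p : Pt k r n) (v : Mod k r n) :
    eVal k r n p v = 0 ↔ v ∈ Zsub k r n p := by
  classical
  constructor
  · intro h
    rw [eVal] at h
    have hcoef : ∀ i₀, ev0 k r n p (v (Sum.inl i₀)) = 0 := by
      intro i₀
      have hpi : piAb k r (s1 k r n p v) + piAb k r ↑(s2 k r n p v) = 0 := by
        rw [← map_add, h, map_zero]
      have hz : piAb k r ↑(s2 k r n p v) = 0 := piAb_eq_zero_of_mem_DD k r (s2 k r n p v).2
      rw [hz, add_zero] at hpi
      have hs1 : piAb k r (s1 k r n p v)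
          = ∑ i, ev0 k r n p (v (Sum.inl i)) • (Pi.single i 1 : Ab k r) := by
        have hmap := map_sum (piAb k r).toLinearMap
          (fun i => ev0 k r n p (v (Sum.inl i)) • of k (Fin r) i) Finset.univ
        simp only [LieHom.coe_toLinearMap] at hmap
        rw [s1, hmap]
        refine Finset.sum_congr rfl fun i _ => ?_
        rw [map_smul, piAb_of]
      rw [hs1] at hpi
      have hfun := congrFun hpi i₀
      rw [Finset.sum_apply] at hfun
      rw [Finset.sum_eq_single i₀ (fun b _ hb => by simp [Pi.single_eq_of_ne (Ne.symm hb)])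
        (fun hn => absurd (Finset.mem_univ i₀) hn)] at hfun
      simpa using hfun
    have hs1 : s1 k r n p v = 0 := by
      rw [s1]
      exact Finset.sum_eq_zero fun i _ => by rw [hcoef i, zero_smul]
    have hs2 : s2 k r n p v = 0 := by
      apply Subtype.ext
      rw [hs1, zero_add] at h
      exact h
    exact ⟨hs1, hs2⟩
  · rintro ⟨h1, h2⟩
    rw [eVal, h1, h2]
    simp

theorem ev_of_inl (p : Pt k r n) (i : Fin r) :
    LieAG.ev k r n p (of k (Fin r ⊕ Fin n) (Sum.inl i)) = of k (Fin r) i := by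
  simp [LieAG.ev, FreeMetabelian.lift_of]

theorem ev_of_inr (p : Pt k r n) (j : Fin n) :
    LieAG.ev k r n p (of k (Fin r ⊕ Fin n) (Sum.inr j)) = p j := by
  simp [LieAG.ev, FreeMetabelian.lift_of]

theorem pj_repr (p : Pt k r n) (j : Fin n) :
    (∑ i, lam k r n p j i • of k (Fin r) i) + ↑(mpart k r n p j) = p j := by
  simp only [mpart]
  abel

theorem sum_lie' {α : Type*} (s : Finset α) (f : α → FreeMetabelian k (Fin r))
    (y : FreeMetabelian k (Fin r)) : ⁅∑ i ∈ s, f i, y⁆ = ∑ i ∈ s, ⁅f i, y⁆ :=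
  map_sum (AddMonoidHom.mk' (fun x => ⁅x, y⁆) (fun a b => add_lie a b y)) f s

theorem lie_sum' {α : Type*} (y : FreeMetabelian k (Fin r)) (s : Finset α)
    (f : α → FreeMetabelian k (Fin r)) : ⁅y, ∑ i ∈ s, f i⁆ = ∑ i ∈ s, ⁅y, f i⁆ :=
  map_sum (AddMonoidHom.mk' (fun x => ⁅y, x⁆) (fun a b => lie_add y a b)) f s

/-- Symbolic element representing the cross terms of a bracket. -/
noncomputable def crossMod (vf vg : Mod k r n) : Mod k r n :=
  Sum.elim (fun _ => 0)
    (Sum.elim (fun ii => tau k r n (vf (Sum.inl ii.1)) * tau k r n (vg (Sum.inl ii.2)))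
      (fun _ => 0))

/-- Symbolic element representing the mixed terms of a bracket. -/
noncomputable def mixMod (vf vg : Mod k r n) : Mod k r n :=
  Sum.elim (fun _ => 0)
    (fun c => ∑ i, tau k r n (vf (Sum.inl i)) * (MvPolynomial.X (Sum.inr i) * vg (Sum.inr c)))

/-- Symbolic element representing a bracket. -/
noncomputable def brMod (vf vg : Mod k r n) : Mod k r n :=
  crossMod k r n vf vg
    + (mixMod k r n vf vg + (MvPolynomial.C (-1 : k) : Rg k r n) • mixMod k r n vg vf)

theorem s1_crossMod (p : Pt k r n) (vf vg : Mod k r n) :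
    s1 k r n p (crossMod k r n vf vg) = 0 := by
  rw [s1]
  refine Finset.sum_eq_zero fun i _ => ?_
  simp [crossMod]

theorem s1_mixMod (p : Pt k r n) (vf vg : Mod k r n) :
    s1 k r n p (mixMod k r n vf vg) = 0 := by
  rw [s1]
  refine Finset.sum_eq_zero fun i _ => ?_
  simp [mixMod]

theorem coe_s2_crossMod (p : Pt k r n) (vf vg : Mod k r n) :
    (↑(s2 k r n p (crossMod k r n vf vg)) : FreeMetabelian k (Fin r))
      = ∑ i, ∑ i', (ev0 k r n p (vf (Sum.inl i)) * ev0 k r n p (vg (Sum.inl i')))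
          • ⁅of k (Fin r) i, of k (Fin r) i'⁆ := by
  have hzero : ∑ j : Fin n,
      (Ep k r n p (crossMod k r n vf vg (Sum.inr (Sum.inr j))) : Module.End k ↥(DD k r))
        (wGen k r n p (Sum.inr j)) = 0 := by
    refine Finset.sum_eq_zero fun j _ => ?_
    simp [crossMod]
  have hterm : ∀ ii : Fin r × Fin r,
      (Ep k r n p (crossMod k r n vf vg (Sum.inr (Sum.inl ii))) : Module.End k ↥(DD k r))
        (wGen k r n p (Sum.inl ii))
      = (ev0 k r n p (vf (Sum.inl ii.1)) * ev0 k r n p (vg (Sum.inl ii.2)))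
          • wGen k r n p (Sum.inl ii) := by
    intro ii
    simp only [crossMod, Sum.elim_inr, Sum.elim_inl]
    rw [Ep_mul_apply, Ep_tau_apply, Ep_tau_apply, smul_smul]
  rw [s2, Fintype.sum_sum_type, hzero, add_zero,
    Finset.sum_congr rfl (fun ii _ => hterm ii), AddSubmonoidClass.coe_finset_sum,
    Fintype.sum_prod_type]
  rfl

theorem coe_s2_mixMod (p : Pt k r n) (vf vg : Mod k r n) :
    (↑(s2 k r n p (mixMod k r n vf vg)) : FreeMetabelian k (Fin r))
      = ∑ i, ev0 k r n p (vf (Sum.inl i))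
          • ⁅of k (Fin r) i, (↑(s2 k r n p vg) : FreeMetabelian k (Fin r))⁆ := by
  have hterm : ∀ c : (Fin r × Fin r) ⊕ Fin n,
      (Ep k r n p (mixMod k r n vf vg (Sum.inr c)) : Module.End k ↥(DD k r))
        (wGen k r n p c)
      = ∑ i, ev0 k r n p (vf (Sum.inl i))
          • adA k r i ((Ep k r n p (vg (Sum.inr c)) : Module.End k ↥(DD k r))
              (wGen k r n p c)) := by
    intro c
    simp only [mixMod, Sum.elim_inr]
    rw [map_sum, AddSubmonoidClass.coe_finset_sum, LinearMap.sum_apply]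
    refine Finset.sum_congr rfl fun i _ => ?_
    rw [Ep_mul_apply, Ep_mul_apply, Ep_X_apply, Ep_tau_apply]
  have hswap : ∀ i : Fin r,
      ∑ c, ev0 k r n p (vf (Sum.inl i))
          • adA k r i ((Ep k r n p (vg (Sum.inr c)) : Module.End k ↥(DD k r))
              (wGen k r n p c))
      = ev0 k r n p (vf (Sum.inl i)) • adA k r i (s2 k r n p vg) := by
    intro i
    rw [← Finset.smul_sum, ← map_sum (adA k r i)]
    rfl
  rw [s2, Finset.sum_congr rfl (fun c _ => hterm c), Finset.sum_comm,
    Finset.sum_congr rfl (fun i _ => hswap i), AddSubmonoidClass.coe_finset_sum]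
  rfl

theorem eVal_brMod (p : Pt k r n) (vf vg : Mod k r n) :
    eVal k r n p (brMod k r n vf vg) = ⁅eVal k r n p vf, eVal k r n p vg⁆ := by
  have hs1 : s1 k r n p (brMod k r n vf vg) = 0 := by
    rw [brMod, s1_add, s1_add, s1_smul, s1_crossMod, s1_mixMod, s1_mixMod, smul_zero]
    simp
  have hC : (↑(s2 k r n p ((MvPolynomial.C (-1 : k) : Rg k r n) • mixMod k r n vg vf))
        : FreeMetabelian k (Fin r))
      = (-1 : k) • ∑ i, ev0 k r n p (vg (Sum.inl i))
          • ⁅of k (Fin r) i, (↑(s2 k r n p vf) : FreeMetabelian k (Fin r))⁆ := by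
    rw [s2_smul, Ep_C_apply]
    rw [show (↑((-1 : k) • s2 k r n p (mixMod k r n vg vf)) : FreeMetabelian k (Fin r))
        = (-1 : k) • ↑(s2 k r n p (mixMod k r n vg vf)) from rfl]
    rw [coe_s2_mixMod]
  have h1 : ⁅s1 k r n p vf, s1 k r n p vg⁆
      = ∑ i, ∑ i', (ev0 k r n p (vf (Sum.inl i)) * ev0 k r n p (vg (Sum.inl i')))
          • ⁅of k (Fin r) i, of k (Fin r) i'⁆ := by
    rw [s1, s1, sum_lie']
    refine Finset.sum_congr rfl fun i _ => ?_
    rw [smul_lie, lie_sum', Finset.smul_sum]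
    refine Finset.sum_congr rfl fun i' _ => ?_
    rw [lie_smul, smul_smul]
  have h2 : ⁅s1 k r n p vf, (↑(s2 k r n p vg) : FreeMetabelian k (Fin r))⁆
      = ∑ i, ev0 k r n p (vf (Sum.inl i))
          • ⁅of k (Fin r) i, (↑(s2 k r n p vg) : FreeMetabelian k (Fin r))⁆ := by
    rw [s1, sum_lie']
    exact Finset.sum_congr rfl fun i _ => by rw [smul_lie]
  have h3 : ⁅(↑(s2 k r n p vf) : FreeMetabelian k (Fin r)), s1 k r n p vg⁆
      = (-1 : k) • ∑ i, ev0 k r n p (vg (Sum.inl i))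
          • ⁅of k (Fin r) i, (↑(s2 k r n p vf) : FreeMetabelian k (Fin r))⁆ := by
    rw [s1, lie_sum', neg_one_smul, ← Finset.sum_neg_distrib]
    refine Finset.sum_congr rfl fun i _ => ?_
    rw [lie_smul, ← lie_skew, smul_neg]
  have h0 : ⁅(↑(s2 k r n p vf) : FreeMetabelian k (Fin r)),
      (↑(s2 k r n p vg) : FreeMetabelian k (Fin r))⁆ = 0 :=
    DD_bracket_eq_zero k r (s2 k r n p vf).2 (s2 k r n p vg).2
  rw [show eVal k r n p vf = s1 k r n p vf + ↑(s2 k r n p vf) from rfl,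
    show eVal k r n p vg = s1 k r n p vg + ↑(s2 k r n p vg) from rfl]
  rw [lie_add, add_lie, add_lie, h0, h1, h2, h3, add_zero]
  rw [eVal, hs1, zero_add, brMod, s2_add, s2_add]
  rw [show (↑(s2 k r n p (crossMod k r n vf vg)
        + (s2 k r n p (mixMod k r n vf vg)
          + s2 k r n p ((MvPolynomial.C (-1 : k) : Rg k r n) • mixMod k r n vg vf)))
      : FreeMetabelian k (Fin r))
      = ↑(s2 k r n p (crossMod k r n vf vg))
        + (↑(s2 k r n p (mixMod k r n vf vg))
          + ↑(s2 k r n p ((MvPolynomial.C (-1 : k) : Rg k r n) • mixMod k r n vg vf)))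
      from rfl]
  rw [coe_s2_crossMod, coe_s2_mixMod, hC]
  abel

/-- Every element of the free metabelian Lie algebra admits a symbolic representation
of its evaluations. -/
theorem main_repr (f : FreeMetabelian k (Fin r ⊕ Fin n)) :
    ∃ v : Mod k r n, ∀ p : Pt k r n, LieAG.ev k r n p f = eVal k r n p v := by
  classical
  have hf : f ∈ LieSubalgebra.lieSpan k (FreeMetabelian k (Fin r ⊕ Fin n))
      (Set.range (of k (Fin r ⊕ Fin n))) := by
    rw [lieSpan_of_eq_top]; trivial
  refine LieSubalgebra.lieSpan_induction (R := k) (L := FreeMetabelian k (Fin r ⊕ Fin n))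
    (p := fun f _ => ∃ v : Mod k r n, ∀ p : Pt k r n, LieAG.ev k r n p f = eVal k r n p v)
    (hx := hf) ?_ ?_ ?_ ?_ ?_
  · rintro z ⟨x, rfl⟩
    cases x with
    | inl i =>
      refine ⟨Sum.elim (fun i' => if i' = i then 1 else 0) 0, fun p => ?_⟩
      rw [ev_of_inl]
      have hs2 : s2 k r n p (Sum.elim (fun i' => if i' = i then 1 else 0) 0) = 0 := by
        rw [s2]
        refine Finset.sum_eq_zero fun c _ => ?_
        simp
      have hs1 : s1 k r n p (Sum.elim (fun i' => if i' = i then 1 else 0) 0)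
          = of k (Fin r) i := by
        rw [s1]
        rw [Finset.sum_eq_single i (fun b _ hb => by simp [hb])
          (fun hn => absurd (Finset.mem_univ i) hn)]
        simp
      rw [eVal, hs1, hs2]
      simp
    | inr j =>
      set vj : Mod k r n := Sum.elim (fun i => MvPolynomial.X (Sum.inl (j, i)))
        (Sum.elim (fun _ => 0) (fun j' => if j' = j then 1 else 0)) with hvj
      refine ⟨vj, fun p => ?_⟩
      rw [ev_of_inr]
      have hs1 : s1 k r n p vj = ∑ i, lam k r n p j i • of k (Fin r) i := by
        rw [s1]
        refine Finset.sum_congr rfl fun i _ => ?_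
        simp [hvj, ev0]
      have hs2 : s2 k r n p vj = mpart k r n p j := by
        rw [s2, Fintype.sum_sum_type]
        have hz : ∑ ii : Fin r × Fin r,
            (Ep k r n p (vj (Sum.inr (Sum.inl ii))) : Module.End k ↥(DD k r))
              (wGen k r n p (Sum.inl ii)) = 0 :=
          Finset.sum_eq_zero fun ii _ => by simp [hvj]
        rw [hz, zero_add, Finset.sum_eq_single j (fun b _ hb => by simp [hvj, hb])
          (fun hn => absurd (Finset.mem_univ j) hn)]
        simp [hvj, wGen]
      rw [eVal, hs1, hs2, pj_repr]
  · exact ⟨0, fun p => by rw [map_zero, eVal_zero]⟩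
  pick_goal 2
  · rintro t y _ ⟨v, hv⟩
    exact ⟨(MvPolynomial.C t : Rg k r n) • v, fun p => by
      rw [map_smul, hv p, eVal_smulk]⟩
  · rintro y z _ _ ⟨v, hv⟩ ⟨w, hw⟩
    exact ⟨v + w, fun p => by rw [map_add, hv p, hw p, eVal_add]⟩
  · rintro y z _ _ ⟨v, hv⟩ ⟨w, hw⟩
    exact ⟨brMod k r n v w, fun p => by
      rw [LieHom.map_lie, hv p, hw p, ← eVal_brMod]⟩

end Module

/-- In a Noetherian module, the span of any set is the span of a finite subset. -/
theorem span_finite_subset {R M : Type*} [Ring R] [AddCommGroup M] [Module R M]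
    [IsNoetherian R M] (s : Set M) :
    ∃ t ⊆ s, t.Finite ∧ Submodule.span R t = Submodule.span R s := by
  classical
  obtain ⟨F, hF⟩ := IsNoetherian.noetherian (Submodule.span R s)
  have hmem : ∀ x : {x // x ∈ F}, ∃ tt : Finset M, (↑tt : Set M) ⊆ s
      ∧ (x : M) ∈ Submodule.span R (↑tt : Set M) := by
    intro x
    have hx : (x : M) ∈ Submodule.span R s := by
      rw [← hF]; exact Submodule.subset_span x.2
    exact Submodule.mem_span_finite_of_mem_span hx
  choose t ht1 ht2 using hmem
  refine ⟨⋃ x : {x // x ∈ F}, ↑(t x), Set.iUnion_subset fun x => ht1 x,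
    Set.finite_iUnion fun x => (t x).finite_toSet, ?_⟩
  apply le_antisymm
  · exact Submodule.span_mono (Set.iUnion_subset fun x => ht1 x)
  · rw [← hF, Submodule.span_le]
    intro y hy
    exact Submodule.span_mono
      (Set.subset_iUnion (fun x : {x // x ∈ F} => ((t x : Set M))) ⟨y, hy⟩) (ht2 ⟨y, hy⟩)

end MetaNoeth

/-- The free metabelian Lie algebra `F_r` (of rank `r ≥ 2` over a field `k`)
is equationally Noetherian: for every `n` and every system of equations
`S ⊆ F_{r+n}` there is a finite subsystem `S₀ ⊆ S` with `V(S) = V(S₀)`. -/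
theorem freeMetabelian_equationallyNoetherian
    (k : Type u) [Field k] (r : ℕ) (hr : 2 ≤ r) (n : ℕ)
    (S : Set (FreeMetabelian k (Fin r ⊕ Fin n))) :
    ∃ S₀ ⊆ S, S₀.Finite ∧ LieAG.vSet k r n S = LieAG.vSet k r n S₀ := by
  classical
  let v : FreeMetabelian k (Fin r ⊕ Fin n) → MetaNoeth.Mod k r n :=
    fun f => Classical.choose (MetaNoeth.main_repr k r n f)
  have hv : ∀ f (p : MetaNoeth.Pt k r n),
      LieAG.ev k r n p f = MetaNoeth.eVal k r n p (v f) :=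
    fun f => Classical.choose_spec (MetaNoeth.main_repr k r n f)
  haveI : IsNoetherian (MetaNoeth.Rg k r n) (MetaNoeth.Mod k r n) := inferInstance
  obtain ⟨T, hT1, hT2, hT3⟩ :=
    MetaNoeth.span_finite_subset (R := MetaNoeth.Rg k r n) (v '' S)
  have hpre : ∀ x : {x // x ∈ T}, ∃ f, f ∈ S ∧ v f = x := by
    intro x
    obtain ⟨f, hf, hfx⟩ := hT1 x.2
    exact ⟨f, hf, hfx⟩
  choose g hg1 hg2 using hpre
  haveI : Finite {x // x ∈ T} := hT2.to_subtype
  refine ⟨Set.range g, ?_, Set.finite_range g, ?_⟩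
  · rintro f ⟨x, rfl⟩
    exact hg1 x
  · ext p
    simp only [LieAG.vSet, Set.mem_setOf_eq]
    constructor
    · rintro hp f ⟨x, rfl⟩
      exact hp _ (hg1 x)
    · intro hp f hf
      have hZ : Submodule.span (MetaNoeth.Rg k r n) T ≤ MetaNoeth.Zsub k r n p := by
        rw [Submodule.span_le]
        intro x hx
        have hx0 : LieAG.ev k r n p (g ⟨x, hx⟩) = 0 := hp _ ⟨⟨x, hx⟩, rfl⟩
        have hmemZ := (MetaNoeth.eVal_eq_zero_iff k r n p (v (g ⟨x, hx⟩))).mp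
          (by rw [← hv _ p]; exact hx0)
        rw [hg2 ⟨x, hx⟩] at hmemZ
        exact hmemZ
      have hmem : v f ∈ Submodule.span (MetaNoeth.Rg k r n) T := by
        rw [hT3]
        exact Submodule.subset_span ⟨f, hf, rfl⟩
      have hz := (MetaNoeth.eVal_eq_zero_iff k r n p (v f)).mpr (hZ hmem)
      rw [hv f p, hz]
end

section
/- Let k be a field, r ≥ 2, and let a₁, a₂ be two distinct free generators of F_r. Then for every c ∈ F_r one has ⁅⁅a₁,a₂⁆,c⁆ = 0 if and only if c lies in the derived ideal F_r². Consequently the Fitting radical Fit(F_r) = F_r² is an algebraic set in the affine space F_r¹, namely V({⁅⁅a₁,a₂⁆,x₁⁆}). -/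
open LieAlgebra

universe u v w

variable (k : Type u) [Field k]

namespace MyAux
open MvPolynomial
noncomputable section
variable {k : Type u} [Field k]

/-! ### Generic lemmas about derived series and metabelian algebras -/

lemma d1_eq (L : Type v) [LieRing L] [LieAlgebra k L] :
    derivedSeries k L 1 = ⁅(⊤ : LieIdeal k L), (⊤ : LieIdeal k L)⁆ := by
  rw [derivedSeries_def, derivedSeriesOfIdeal_succ, derivedSeriesOfIdeal_zero]

lemma lie_mem_d1 {L : Type v} [LieRing L] [LieAlgebra k L] (x y : L) :
    ⁅x, y⁆ ∈ derivedSeries k L 1 := by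
  rw [d1_eq]
  exact LieSubmodule.lie_mem_lie trivial trivial

lemma lie_eq_zero_of_metab {L : Type v} [LieRing L] [LieAlgebra k L] (hL : IsMetabelian L)
    {x y : L} (hx : x ∈ derivedSeries k L 1) (hy : y ∈ derivedSeries k L 1) : ⁅x, y⁆ = 0 := by
  have h2 : ⁅x, y⁆ ∈ derivedSeries k L 2 := by
    rw [show derivedSeries k L 2 = ⁅derivedSeries k L 1, derivedSeries k L 1⁆ by
      rw [derivedSeries_def, derivedSeriesOfIdeal_succ]]
    exact LieSubmodule.lie_mem_lie hx hy
  rw [LieMeta.derivedSeries_two_eq_bot_of_isMetabelian hL] at h2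
  simpa using h2

lemma map_d1 {L : Type v} {B : Type w} [LieRing L] [LieAlgebra k L] [LieRing B] [LieAlgebra k B]
    (f : L →ₗ⁅k⁆ B) {x : L} (hx : x ∈ derivedSeries k L 1) : f x ∈ derivedSeries k B 1 :=
  LieIdeal.derivedSeries_map_le 1 (LieIdeal.mem_map hx)

lemma isMetabelian_subalgebra {L : Type v} [LieRing L] [LieAlgebra k L] (hL : IsMetabelian L)
    (S : LieSubalgebra k L) : IsMetabelian ↥S := by
  intro a b c d
  apply Subtype.ext
  simp only [LieSubalgebra.coe_bracket, ZeroMemClass.coe_zero]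
  exact hL _ _ _ _

/-! ### Extensionality and decomposition in the free metabelian Lie algebra -/

lemma FM.hom_ext {X : Type v} {B : Type w} [LieRing B] [LieAlgebra k B]
    {f g : FreeMetabelian k X →ₗ⁅k⁆ B}
    (h : ∀ x, f (FreeMetabelian.of k X x) = g (FreeMetabelian.of k X x)) : f = g := by
  have key : f.comp (LieMeta.mkHom k (derivedSeries k (FreeLieAlgebra k X) 2))
      = g.comp (LieMeta.mkHom k (derivedSeries k (FreeLieAlgebra k X) 2)) :=
    FreeLieAlgebra.hom_ext (fun x => h x)
  ext y
  obtain ⟨z⟩ := y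
  exact LieHom.congr_fun key z

lemma FM.decomp {r : ℕ} (c : FreeMetabelian k (Fin r)) :
    ∃ (lam : Fin r → k) (d : FreeMetabelian k (Fin r)),
      d ∈ derivedSeries k (FreeMetabelian k (Fin r)) 1 ∧
      c = (∑ i, lam i • FreeMetabelian.of k (Fin r) i) + d := by
  let S : LieSubalgebra k (FreeMetabelian k (Fin r)) :=
    { toSubmodule := Submodule.span k (Set.range (FreeMetabelian.of k (Fin r)))
        ⊔ LieSubmodule.toSubmodule (derivedSeries k (FreeMetabelian k (Fin r)) 1)
      lie_mem' := fun {x y} _ _ => Submodule.mem_sup_right (lie_mem_d1 x y) }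
  have hmem : ∀ i, FreeMetabelian.of k (Fin r) i ∈ S := fun i =>
    Submodule.mem_sup_left (Submodule.subset_span (Set.mem_range_self i))
  have hSmet : IsMetabelian ↥S :=
    isMetabelian_subalgebra (FreeMetabelian.isMetabelian k (Fin r)) S
  let ψ : FreeMetabelian k (Fin r) →ₗ⁅k⁆ ↥S :=
    FreeMetabelian.lift (fun i => ⟨FreeMetabelian.of k (Fin r) i, hmem i⟩) hSmet
  have key : S.incl.comp ψ = LieHom.id := by
    apply FM.hom_ext
    intro x
    simp [ψ, FreeMetabelian.lift_of]
  have hc : c ∈ S := by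
    have : S.incl (ψ c) = c := LieHom.congr_fun key c
    rw [← this]
    exact (ψ c).2
  obtain ⟨s, hs, d, hd, hsd⟩ := Submodule.mem_sup.mp hc
  obtain ⟨lam, hlam⟩ := (Submodule.mem_span_range_iff_exists_fun _).mp hs
  exact ⟨lam, d, hd, by rw [← hsd, hlam]⟩

/-! ### The metabelian model `L2` -/

def ell (v : Fin 2 → k) : MvPolynomial (Fin 2) k := C (v 0) * X 0 + C (v 1) * X 1
def om (v w : Fin 2 → k) : k := v 0 * w 1 - v 1 * w 0

def L2 (k : Type u) [Field k] : Type u := (Fin 2 → k) × MvPolynomial (Fin 2) k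

instance : AddCommGroup (L2 k) :=
  inferInstanceAs (AddCommGroup ((Fin 2 → k) × MvPolynomial (Fin 2) k))
instance : Module k (L2 k) :=
  inferInstanceAs (Module k ((Fin 2 → k) × MvPolynomial (Fin 2) k))

lemma L2.add_def (a b : L2 k) : a + b = (a.1 + b.1, a.2 + b.2) := rfl
lemma L2.smul_def (t : k) (a : L2 k) : t • a = (t • a.1, t • a.2) := rfl
lemma L2.zero_def : (0 : L2 k) = ((0 : Fin 2 → k), (0 : MvPolynomial (Fin 2) k)) := rfl

instance : LieRing (L2 k) where
  bracket x y := ((0 : Fin 2 → k), ell x.1 * y.2 - ell y.1 * x.2 + C (om x.1 y.1))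
  add_lie x y z := by
    show (Prod.mk _ _ : L2 k) = _
    simp only [L2.add_def, ell, om, Pi.add_apply, map_add, map_sub, map_mul, Prod.mk.injEq]
    exact Prod.ext (show (0 : Fin 2 → k) = 0 + 0 by simp) (by show _ = _ + _; dsimp only; ring)
  lie_add x y z := by
    show (Prod.mk _ _ : L2 k) = _
    simp only [L2.add_def, ell, om, Pi.add_apply, map_add, map_sub, map_mul, Prod.mk.injEq]
    exact Prod.ext (show (0 : Fin 2 → k) = 0 + 0 by simp) (by show _ = _ + _; dsimp only; ring)
  lie_self x := by
    show (Prod.mk _ _ : L2 k) = _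
    simp only [L2.zero_def, ell, om, Prod.mk.injEq]
    refine ⟨by simp, by ring_nf; simp⟩
  leibniz_lie x y z := by
    show (Prod.mk _ _ : L2 k) = _
    simp only [L2.add_def, ell, om, Pi.add_apply, Pi.zero_apply, map_add, map_sub, map_mul,
      map_zero, Prod.mk.injEq]
    exact Prod.ext (show (0 : Fin 2 → k) = 0 + 0 by simp) (by show _ = _ + _; dsimp only; ring)

lemma L2.bracket_def' (a b : L2 k) :
    ⁅a, b⁆ = ((0 : Fin 2 → k), ell a.1 * b.2 - ell b.1 * a.2 + C (om a.1 b.1)) := rfl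

instance : LieAlgebra k (L2 k) where
  lie_smul t x y := by
    rw [L2.bracket_def', L2.bracket_def']
    refine Prod.ext (show (0 : Fin 2 → k) = t • 0 by simp) ?_
    show ell x.1 * (t • y.2) - ell (t • y.1) * x.2 + C (om x.1 (t • y.1)) =
      t • (ell x.1 * y.2 - ell y.1 * x.2 + C (om x.1 y.1))
    simp only [ell, om, Pi.smul_apply, smul_eq_mul, MvPolynomial.smul_eq_C_mul, map_sub, map_mul]
    ring

lemma L2.bracket_def (a b : L2 k) :
    ⁅a, b⁆ = ((0 : Fin 2 → k), ell a.1 * b.2 - ell b.1 * a.2 + C (om a.1 b.1)) := rfl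


lemma ell_zero : ell (0 : Fin 2 → k) = 0 := by simp [ell]

lemma om_zero_left (v : Fin 2 → k) : om 0 v = 0 := by simp [om]
lemma om_zero_right (v : Fin 2 → k) : om v 0 = 0 := by simp [om]

lemma L2.isMetabelian : IsMetabelian (L2 k) := by
  intro a b c d
  rw [L2.bracket_def ⁅a,b⁆ ⁅c,d⁆]
  have h1 : (⁅a,b⁆ : L2 k).1 = 0 := rfl
  have h2 : (⁅c,d⁆ : L2 k).1 = 0 := rfl
  rw [h1, h2, ell_zero, om_zero_left, L2.zero_def]
  simp
  rfl

/-- The ideal of elements with vanishing first component. -/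
def KL2 : LieIdeal k (L2 k) where
  carrier := {x | x.1 = 0}
  add_mem' := by
    intro a b ha hb
    show (a + b).1 = 0
    rw [L2.add_def]
    show a.1 + b.1 = 0
    rw [ha, hb, add_zero]
  zero_mem' := rfl
  smul_mem' := by
    intro t a ha
    show (t • a).1 = 0
    rw [L2.smul_def]
    show t • a.1 = 0
    rw [ha, smul_zero]
  lie_mem := fun _ => rfl

lemma mem_KL2 {x : L2 k} : x ∈ KL2 (k := k) ↔ x.1 = 0 := Iff.rfl

lemma derived_le_KL2 : LieAlgebra.derivedSeries k (L2 k) 1 ≤ KL2 := by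
  rw [show LieAlgebra.derivedSeries k (L2 k) 1
      = ⁅(⊤ : LieIdeal k (L2 k)), (⊤ : LieIdeal k (L2 k))⁆ by
    rw [LieAlgebra.derivedSeries_def, LieAlgebra.derivedSeriesOfIdeal_succ,
      LieAlgebra.derivedSeriesOfIdeal_zero]]
  rw [LieSubmodule.lie_le_iff]
  intro x _ m _
  exact rfl

lemma ell_eq_zero_iff {v : Fin 2 → k} : ell v = 0 ↔ v = 0 := by
  constructor
  · intro h
    have h0 := congrArg (MvPolynomial.eval (fun i => if i = 0 then (1:k) else 0)) h
    have h1 := congrArg (MvPolynomial.eval (fun i => if i = 0 then (0:k) else 1)) h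
    simp [ell] at h0 h1
    funext i
    fin_cases i
    · simpa using h0
    · simpa using h1
  · rintro rfl; exact ell_zero

lemma ell_ne_zero {v : Fin 2 → k} (hv : v 0 ≠ 0) : ell v ≠ 0 := by
  intro h
  exact hv (by rw [ell_eq_zero_iff.mp h]; rfl)

def L2mk (v : Fin 2 → k) (p : MvPolynomial (Fin 2) k) : L2 k := (v, p)

@[simp] lemma L2mk_fst (v : Fin 2 → k) (p : MvPolynomial (Fin 2) k) : (L2mk v p).1 = v := rfl
@[simp] lemma L2mk_snd (v : Fin 2 → k) (p : MvPolynomial (Fin 2) k) : (L2mk v p).2 = p := rfl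

lemma L2mk_eta (x : L2 k) : L2mk x.1 x.2 = x := rfl

lemma L2mk_inj {v w : Fin 2 → k} {p q : MvPolynomial (Fin 2) k}
    (h : L2mk v p = L2mk w q) : v = w ∧ p = q := by
  constructor
  · exact congrArg Prod.fst h
  · exact congrArg Prod.snd h

lemma L2.bracket_mk (v w : Fin 2 → k) (p q : MvPolynomial (Fin 2) k) :
    ⁅L2mk v p, L2mk w q⁆ = L2mk 0 (ell v * q - ell w * p + C (om v w)) := rfl

lemma L2.zero_eq : (0 : L2 k) = L2mk 0 0 := rfl

@[simp] lemma L2mk_smul (t : k) (v : Fin 2 → k) (p : MvPolynomial (Fin 2) k) :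
    t • L2mk v p = L2mk (t • v) (t • p) := rfl

@[simp] lemma L2mk_add (v w : Fin 2 → k) (p q : MvPolynomial (Fin 2) k) :
    L2mk v p + L2mk w q = L2mk (v + w) (p + q) := rfl

/-- Bracket with a first-component-zero element. -/
lemma L2.bracket_snd (v : Fin 2 → k) (w q : MvPolynomial (Fin 2) k) :
    ⁅L2mk v w, L2mk 0 q⁆ = L2mk 0 (ell v * q) := by
  rw [L2.bracket_mk, ell_zero, om_zero_right]
  simp


def L2fst : L2 k →ₗ[k] (Fin 2 → k) :=
  LinearMap.fst k (Fin 2 → k) (MvPolynomial (Fin 2) k)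

def L2snd : L2 k →ₗ[k] MvPolynomial (Fin 2) k :=
  LinearMap.snd k (Fin 2 → k) (MvPolynomial (Fin 2) k)

lemma L2fst_apply (x : L2 k) : L2fst x = x.1 := rfl
lemma L2snd_apply (x : L2 k) : L2snd x = x.2 := rfl

lemma sum_L2mk {r : ℕ} (lam : Fin r → k) (w : Fin r → (Fin 2 → k)) :
    (∑ i, lam i • L2mk (w i) 0) = L2mk (∑ i, lam i • w i) 0 := by
  refine Prod.ext ?_ ?_
  · show L2fst (∑ i, lam i • L2mk (w i) 0) = _
    rw [map_sum]
    simp only [map_smul, L2fst_apply, L2mk_fst]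
  · show L2snd (∑ i, lam i • L2mk (w i) 0) = _
    rw [map_sum]
    simp only [map_smul, L2snd_apply, L2mk_snd, smul_zero]
    exact Finset.sum_const_zero

lemma phi_apply_decomp {r : ℕ} (w : Fin r → (Fin 2 → k)) (lam : Fin r → k)
    {d : FreeMetabelian k (Fin r)} (hd : d ∈ derivedSeries k (FreeMetabelian k (Fin r)) 1) :
    (FreeMetabelian.lift (fun t => L2mk (w t) 0) L2.isMetabelian)
        ((∑ i, lam i • FreeMetabelian.of k (Fin r) i) + d)
      = L2mk (∑ i, lam i • w i)
          ((FreeMetabelian.lift (fun t => L2mk (w t) 0) L2.isMetabelian d).2) := by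
  have h1 : (FreeMetabelian.lift (fun t => L2mk (w t) 0) L2.isMetabelian)
      (∑ i, lam i • FreeMetabelian.of k (Fin r) i) = L2mk (∑ i, lam i • w i) 0 := by
    rw [← LieHom.coe_toLinearMap, map_sum]
    simp only [LieHom.coe_toLinearMap, map_smul, FreeMetabelian.lift_of]
    exact sum_L2mk lam w
  have h2 : ((FreeMetabelian.lift (fun t => L2mk (w t) 0) L2.isMetabelian) d).1 = 0 :=
    derived_le_KL2 (map_d1 _ hd)
  rw [map_add, h1,
    ← L2mk_eta ((FreeMetabelian.lift (fun t => L2mk (w t) 0) L2.isMetabelian) d), h2, L2mk_add]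
  simp

lemma coord_sum {r : ℕ} (lam : Fin r → k) (w : Fin r → (Fin 2 → k)) (s : Fin 2) :
    (∑ i, lam i • w i) s = ∑ i, lam i * w i s := by
  rw [Finset.sum_apply]
  simp [Pi.smul_apply]

lemma key_sum_zero {r : ℕ} (lam : Fin r → k) {d : FreeMetabelian k (Fin r)}
    (hd : d ∈ derivedSeries k (FreeMetabelian k (Fin r)) 1) (i0 i1 : Fin r)
    (h : ⁅⁅FreeMetabelian.of k (Fin r) i0, FreeMetabelian.of k (Fin r) i1⁆,
        (∑ i, lam i • FreeMetabelian.of k (Fin r) i) + d⁆ = 0)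
    (w : Fin r → (Fin 2 → k)) (hw0 : w i0 = Pi.single 0 1) (hw1 : w i1 = Pi.single 1 1) :
    (∑ i, lam i • w i) = 0 := by
  have h0 := congrArg (FreeMetabelian.lift (fun t => L2mk (w t) 0) L2.isMetabelian) h
  rw [map_zero, LieHom.map_lie, LieHom.map_lie, phi_apply_decomp w lam hd,
    FreeMetabelian.lift_of, FreeMetabelian.lift_of, hw0, hw1, L2.bracket_mk,
    L2.bracket_mk] at h0
  have hom12 : om (Pi.single 0 1 : Fin 2 → k) (Pi.single 1 1) = 1 := by
    simp [om, Pi.single_apply]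
  rw [mul_zero, mul_zero, sub_zero, hom12, zero_add, map_one, ell_zero, om_zero_left,
    zero_mul, mul_one, zero_sub, map_zero, add_zero, L2.zero_eq] at h0
  have h2 := (L2mk_inj h0).2
  rw [neg_eq_zero] at h2
  exact ell_eq_zero_iff.mp h2

lemma not_nilpotent {r : ℕ} (lam : Fin r → k) {d : FreeMetabelian k (Fin r)}
    (hd : d ∈ derivedSeries k (FreeMetabelian k (Fin r)) 1) (j m : Fin r) (hjm : j ≠ m)
    (hlj : lam j ≠ 0) :
    ¬ LieModule.IsNilpotent ↥(LieSubmodule.lieSpan k (FreeMetabelian k (Fin r))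
      ({(∑ i, lam i • FreeMetabelian.of k (Fin r) i) + d} :
        Set (FreeMetabelian k (Fin r)))) ↥(LieSubmodule.lieSpan k (FreeMetabelian k (Fin r))
      ({(∑ i, lam i • FreeMetabelian.of k (Fin r) i) + d} :
        Set (FreeMetabelian k (Fin r)))) := by
  intro hnil
  set x := (∑ i, lam i • FreeMetabelian.of k (Fin r) i) + d with hxdef
  set I := LieSubmodule.lieSpan k (FreeMetabelian k (Fin r))
    ({x} : Set (FreeMetabelian k (Fin r))) with hIdef
  set w : Fin r → (Fin 2 → k) :=
    fun t => if t = j then Pi.single 0 1 else if t = m then Pi.single 1 1 else 0 with hwdef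
  set φ := FreeMetabelian.lift (k := k) (X := Fin r) (fun t => L2mk (w t) 0) L2.isMetabelian with hφdef
  set V := ∑ i, lam i • w i with hVdef
  set W := (φ d).2 with hWdef
  have hφx : φ x = L2mk V W := phi_apply_decomp w lam hd
  have hV0 : V 0 = lam j := by
    rw [hVdef, coord_sum]
    have : ∀ i : Fin r, lam i * w i 0 = if i = j then lam i else 0 := by
      intro i
      rw [hwdef]
      by_cases hij : i = j
      · simp [hij, Pi.single_apply]
      · by_cases him : i = m <;> simp [hij, him, Ne.symm hjm, Pi.single_apply]
    rw [Finset.sum_congr rfl (fun i _ => this i)]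
    simp
  have hwm : w m = Pi.single 1 1 := by
    rw [hwdef]
    simp [Ne.symm hjm]
  -- the iterated bracket sequence
  have hxI : x ∈ I := LieSubmodule.subset_lieSpan rfl
  have huI : (⁅FreeMetabelian.of k (Fin r) m, x⁆ : FreeMetabelian k (Fin r)) ∈ I :=
    I.lie_mem hxI
  set y : ℕ → FreeMetabelian k (Fin r) :=
    fun n => (fun z => ⁅x, z⁆)^[n] ⁅FreeMetabelian.of k (Fin r) m, x⁆ with hydef
  have hysucc : ∀ n, y (n + 1) = ⁅x, y n⁆ := fun n =>
    Function.iterate_succ_apply' _ _ _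
  have hyI : ∀ n, ∃ z : ↥I, z ∈ LieModule.lowerCentralSeries k ↥I ↥I n ∧ (z : FreeMetabelian k (Fin r)) = y n := by
    intro n
    induction n with
    | zero => exact ⟨⟨_, huI⟩, LieSubmodule.mem_top _, rfl⟩
    | succ n ih =>
      obtain ⟨z, hz, hzc⟩ := ih
      refine ⟨⁅(⟨x, hxI⟩ : ↥I), z⁆, ?_, ?_⟩
      · rw [LieModule.lowerCentralSeries_succ]
        exact LieSubmodule.lie_mem_lie (LieSubmodule.mem_top _) hz
      · rw [hysucc, ← hzc]
        rfl
  set Q := ell (Pi.single 1 1 : Fin 2 → k) * W - C (V 0) with hQdef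
  have hyval : ∀ n, φ (y n) = L2mk 0 ((ell V) ^ n * Q) := by
    intro n
    induction n with
    | zero =>
      show φ ⁅FreeMetabelian.of k (Fin r) m, x⁆ = _
      rw [LieHom.map_lie, hφx, FreeMetabelian.lift_of, hwm, L2.bracket_mk]
      rw [hQdef, pow_zero, one_mul]
      congr 1
      have : om (Pi.single 1 1 : Fin 2 → k) V = -(V 0) := by
        simp [om, Pi.single_apply]
      rw [this, mul_zero, sub_zero, map_neg]
      ring
    | succ n ih =>
      rw [hysucc, LieHom.map_lie, ih, hφx, L2.bracket_snd, pow_succ]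
      congr 1
      ring
  obtain ⟨N, hN⟩ := (LieModule.isNilpotent_iff k _ _).mp hnil
  obtain ⟨z, hz, hzc⟩ := hyI N
  rw [hN, LieSubmodule.mem_bot] at hz
  have hyN : y N = 0 := by rw [← hzc, hz]; rfl
  have h0 := hyval N
  rw [hyN, map_zero, L2.zero_eq] at h0
  have h2 := (L2mk_inj h0).2.symm
  rcases mul_eq_zero.mp h2 with h3 | h3
  · exact ell_ne_zero (by rw [hV0]; exact hlj) (pow_eq_zero_iff'.mp h3).1
  · have hcc : MvPolynomial.constantCoeff Q = -(lam j) := by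
      rw [hQdef, map_sub, map_mul]
      simp [ell, hV0]
    rw [h3, map_zero] at hcc
    exact hlj (neg_eq_zero.mp hcc.symm)

lemma sum_ite_one {r : ℕ} (lam : Fin r → k) (c : Fin r → k) (j : Fin r)
    (hc : ∀ i, c i = if i = j then 1 else 0) : ∑ i, lam i * c i = lam j := by
  rw [Finset.sum_congr rfl (fun i _ => by rw [hc i, mul_ite, mul_one, mul_zero])]
  simp

lemma sum_ite_two {r : ℕ} (lam : Fin r → k) (c : Fin r → k) (j t : Fin r) (hjt : j ≠ t)
    (hc : ∀ i, c i = if i = j then 1 else if i = t then 1 else 0) :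
    ∑ i, lam i * c i = lam j + lam t := by
  have key : ∀ i, lam i * c i = (if i = j then lam i else 0) + (if i = t then lam i else 0) := by
    intro i
    rw [hc i]
    by_cases h1 : i = j
    · subst h1
      simp [hjt]
    · by_cases h2 : i = t <;> simp [h1, h2, Ne.symm hjt]
  rw [Finset.sum_congr rfl (fun i _ => key i), Finset.sum_add_distrib]
  simp

end
end MyAux


/-- In the free metabelian Lie algebra `F_r` (`r ≥ 2`, generators `a i`),
an element `c` satisfies `⁅⁅a₁,a₂⁆,c⁆ = 0` iff `c` lies in the derived ideal `F_r²`;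
consequently the Fitting radical `Fit(F_r) = F_r²` is the algebraic set in affine `1`-space
defined by the single equation `⁅⁅a₁,a₂⁆,x₁⁆ = 0`. -/
theorem fitting_is_algebraic
    (k : Type u) [Field k] (r : ℕ) (hr : 2 ≤ r) :
    (∀ c : FreeMetabelian k (Fin r),
      ⁅⁅FreeMetabelian.of k (Fin r) ⟨0, by omega⟩, FreeMetabelian.of k (Fin r) ⟨1, by omega⟩⁆,
        c⁆ = 0 ↔ c ∈ LieAlgebra.derivedSeries k (FreeMetabelian k (Fin r)) 1) ∧
    fittingSet k (FreeMetabelian k (Fin r)) =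
      ↑(LieAlgebra.derivedSeries k (FreeMetabelian k (Fin r)) 1) ∧
    {p : Fin 1 → FreeMetabelian k (Fin r) | p 0 ∈ fittingSet k (FreeMetabelian k (Fin r))} =
      LieAG.vSet k r 1
        {⁅⁅LieAG.incl k r 1 (FreeMetabelian.of k (Fin r) ⟨0, by omega⟩),
            LieAG.incl k r 1 (FreeMetabelian.of k (Fin r) ⟨1, by omega⟩)⁆,
          FreeMetabelian.of k (Fin r ⊕ Fin 1) (Sum.inr 0)⁆} := by
  classical
  have hi01 : (⟨0, by omega⟩ : Fin r) ≠ ⟨1, by omega⟩ := by simp [Fin.ext_iff]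
  have part1 : ∀ c : FreeMetabelian k (Fin r),
      ⁅⁅FreeMetabelian.of k (Fin r) ⟨0, by omega⟩, FreeMetabelian.of k (Fin r) ⟨1, by omega⟩⁆,
        c⁆ = 0 ↔ c ∈ LieAlgebra.derivedSeries k (FreeMetabelian k (Fin r)) 1 := by
    intro c
    constructor
    · intro h
      obtain ⟨lam, d, hd, rfl⟩ := MyAux.FM.decomp c
      have hall : ∀ t : Fin r, lam t = 0 := by
        have hA := MyAux.key_sum_zero lam hd ⟨0, by omega⟩ ⟨1, by omega⟩ h
          (fun s => if s = ⟨0, by omega⟩ then Pi.single 0 1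
            else if s = ⟨1, by omega⟩ then Pi.single 1 1 else 0)
          (by simp) (by simp [Ne.symm hi01])
        have h00 : lam ⟨0, by omega⟩ = 0 := by
          have hco := congrFun hA 0
          rw [MyAux.coord_sum] at hco
          rw [MyAux.sum_ite_one lam _ ⟨0, by omega⟩ ?_] at hco
          · exact hco
          · intro i
            by_cases h1 : i = (⟨0, by omega⟩ : Fin r)
            · simp [h1, Pi.single_apply]
            · by_cases h2 : i = (⟨1, by omega⟩ : Fin r) <;>
                simp [h1, h2, Pi.single_apply]
        have h11 : lam ⟨1, by omega⟩ = 0 := by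
          have hco := congrFun hA 1
          rw [MyAux.coord_sum] at hco
          rw [MyAux.sum_ite_one lam _ ⟨1, by omega⟩ ?_] at hco
          · exact hco
          · intro i
            by_cases h1 : i = (⟨0, by omega⟩ : Fin r)
            · simp [h1, hi01, Ne.symm hi01, Pi.single_apply]
            · by_cases h2 : i = (⟨1, by omega⟩ : Fin r) <;>
                simp [h1, h2, Pi.single_apply]
        intro t
        by_cases ht0 : t = (⟨0, by omega⟩ : Fin r)
        · rw [ht0]; exact h00
        by_cases ht1 : t = (⟨1, by omega⟩ : Fin r)
        · rw [ht1]; exact h11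
        have hB := MyAux.key_sum_zero lam hd ⟨0, by omega⟩ ⟨1, by omega⟩ h
          (fun s => if s = ⟨0, by omega⟩ then Pi.single 0 1
            else if s = ⟨1, by omega⟩ then Pi.single 1 1
            else if s = t then Pi.single 0 1 else 0)
          (by simp) (by simp [Ne.symm hi01])
        have hco := congrFun hB 0
        rw [MyAux.coord_sum] at hco
        rw [MyAux.sum_ite_two lam _ ⟨0, by omega⟩ t (fun hh => ht0 hh.symm) ?_] at hco
        · rw [h00, zero_add] at hco
          exact hco
        · intro i
          by_cases h1 : i = (⟨0, by omega⟩ : Fin r)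
          · simp [h1, Pi.single_apply]
          · by_cases h2 : i = (⟨1, by omega⟩ : Fin r)
            · simp [h1, h2, Ne.symm ht1, Pi.single_apply]
            · by_cases h3 : i = t <;> simp [h1, h2, h3, ht0, ht1, Pi.single_apply]
      have hz : (∑ i, lam i • FreeMetabelian.of k (Fin r) i) = 0 :=
        Finset.sum_eq_zero (fun i _ => by rw [hall i, zero_smul])
      rw [hz, zero_add]
      exact hd
    · intro hc
      exact MyAux.lie_eq_zero_of_metab (FreeMetabelian.isMetabelian k (Fin r))
        (MyAux.lie_mem_d1 _ _) hc
  have part2 : fittingSet k (FreeMetabelian k (Fin r)) =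
      ↑(LieAlgebra.derivedSeries k (FreeMetabelian k (Fin r)) 1) := by
    ext x
    simp only [fittingSet, Set.mem_setOf_eq, SetLike.mem_coe]
    constructor
    · intro hx
      obtain ⟨lam, d, hd, rfl⟩ := MyAux.FM.decomp x
      have hall : ∀ t : Fin r, lam t = 0 := by
        intro t
        by_contra hne
        refine MyAux.not_nilpotent lam hd t
          (if t = (⟨0, by omega⟩ : Fin r) then ⟨1, by omega⟩ else ⟨0, by omega⟩) ?_ hne hx
        by_cases ht : t = (⟨0, by omega⟩ : Fin r)
        · rw [if_pos ht, ht]; exact hi01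
        · rw [if_neg ht]; exact ht
      have hz : (∑ i, lam i • FreeMetabelian.of k (Fin r) i) = 0 :=
        Finset.sum_eq_zero (fun i _ => by rw [hall i, zero_smul])
      rw [hz, zero_add]
      exact hd
    · intro hx
      have hle : LieSubmodule.lieSpan k (FreeMetabelian k (Fin r)) {x} ≤
          LieAlgebra.derivedSeries k (FreeMetabelian k (Fin r)) 1 :=
        (LieSubmodule.lieSpan_le).mpr (Set.singleton_subset_iff.mpr hx)
      haveI : IsLieAbelian
          ↥(LieSubmodule.lieSpan k (FreeMetabelian k (Fin r)) ({x} : Set _)) :=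
        { trivial := fun a b => Subtype.ext (MyAux.lie_eq_zero_of_metab
            (FreeMetabelian.isMetabelian k (Fin r)) (hle a.2) (hle b.2)) }
      infer_instance
  refine ⟨part1, part2, ?_⟩
  ext p
  simp only [Set.mem_setOf_eq, LieAG.vSet, Set.mem_singleton_iff, forall_eq]
  have hev : LieAG.ev k r 1 p
      ⁅⁅LieAG.incl k r 1 (FreeMetabelian.of k (Fin r) ⟨0, by omega⟩),
          LieAG.incl k r 1 (FreeMetabelian.of k (Fin r) ⟨1, by omega⟩)⁆,
        FreeMetabelian.of k (Fin r ⊕ Fin 1) (Sum.inr 0)⁆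
      = ⁅⁅FreeMetabelian.of k (Fin r) ⟨0, by omega⟩,
          FreeMetabelian.of k (Fin r) ⟨1, by omega⟩⁆, p 0⁆ := by
    rw [LieHom.map_lie, LieHom.map_lie]
    simp [LieAG.ev, LieAG.incl, FreeMetabelian.lift_of]
  rw [hev, part2]
  rw [SetLike.mem_coe]
  exact Iff.symm (part1 (p 0))
end
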